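/- Let L be a Lie algebra over a commutative ring K, and let a, b ∈ L. For every r ∈ L and every natural numbers m, n there exists t ∈ L such that ⁅(ad a)^m r, (ad a)^{2n+1} b⁆ = -⁅(ad a)^{m+2n+1} r, b⁆ + ⁅t, a⁆. -/
import Mathlib

private lemma ad_step {L : Type*} [LieRing L] (a x y : L) :
    ⁅x, ⁅y, a⁆⁆ = -⁅⁅x, a⁆, y⁆ + ⁅⁅x, y⁆, a⁆ := by
  rw [leibniz_lie]
  rw [show ⁅y, ⁅x, a⁆⁆ = -⁅⁅x, a⁆, y⁆ from (lie_skew _ _).symm]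
  abel

private lemma ad_move {L : Type*} [LieRing L] (a b : L) :
    ∀ (k m : ℕ) (r : L), ∃ t : L,
      ⁅(fun x : L => ⁅x, a⁆)^[m] r, (fun x : L => ⁅x, a⁆)^[k] b⁆ =
        ((-1 : ℤ) ^ k) • ⁅(fun x : L => ⁅x, a⁆)^[m + k] r, b⁆ + ⁅t, a⁆ := by
  intro k
  induction k with
  | zero =>
    intro m r
    exact ⟨0, by simp⟩
  | succ k ih =>
    intro m r
    obtain ⟨t, ht⟩ := ih (m + 1) r
    set f : L → L := fun x : L => ⁅x, a⁆ with hf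
    refine ⟨-t + ⁅f^[m] r, f^[k] b⁆, ?_⟩
    have h1 : f^[k + 1] b = ⁅f^[k] b, a⁆ := Function.iterate_succ_apply' f k b
    have h2 : f^[m + 1] r = ⁅f^[m] r, a⁆ := Function.iterate_succ_apply' f m r
    rw [h1, ad_step a (f^[m] r) (f^[k] b), ← h2, ht]
    have hm : m + 1 + k = m + (k + 1) := by ring
    rw [hm, pow_succ, mul_neg_one, neg_smul, add_lie, neg_lie]
    abel

theorem odd_ad_rewrite {K L : Type*} [CommRing K] [LieRing L] [LieAlgebra K L]
    (a b : L) (r : L) (m n : ℕ) :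
    ∃ t : L,
      ⁅(fun x : L => ⁅x, a⁆)^[m] r, (fun x : L => ⁅x, a⁆)^[2 * n + 1] b⁆ =
        -⁅(fun x : L => ⁅x, a⁆)^[m + 2 * n + 1] r, b⁆ + ⁅t, a⁆ := by
  obtain ⟨t, ht⟩ := ad_move a b (2 * n + 1) m r
  refine ⟨t, ?_⟩
  rw [ht, Odd.neg_one_pow ⟨n, by ring⟩, neg_one_smul, show m + (2 * n + 1) = m + 2 * n + 1 by ring]
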